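/- Let A, B ⊆ [m] with A ⊄ B and B ⊄ A, Δ = Δ_A ∪ Δ_B, D = Δ + wΔ, N = 2^{|A|} + 2^{|B|} − 2^{|A∩B|}, and D^c = (F_4^m \ {0}) \ D. Then C_{D^c} has length 4^m − N², exactly 4^m distinct codewords (dimension m over F_4), for every nonzero x ∈ F_4^m one has wt(c_{D^c}(x)) = 3·2^{2m−2} − wt(c_D(x)), and the minimum distance of C_{D^c} equals 3·2^{2m−2} − (2^{|A|}+2^{|B|})(3·2^{|A|−2} + 3·2^{|B|−2} − 2^{|A∩B|}). -/

import Mathlib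

set_option linter.unusedSectionVars false
set_option maxHeartbeats 1000000


open Finset

/-- The support of a binary vector, as a finset of coordinates. -/
def supp {m : ℕ} (v : Fin m → ZMod 2) : Finset (Fin m) :=
  Finset.univ.filter (fun i => v i ≠ 0)

/-- The simplicial complex generated by `A`: all binary vectors with support contained in `A`. -/
def delta {m : ℕ} (A : Finset (Fin m)) : Finset (Fin m → ZMod 2) :=
  Finset.univ.filter (fun v => supp v ⊆ A)

variable {F : Type} [Field F] [Fintype F] [DecidableEq F]

/-- The embedding of `F_2 = {0,1}` into a field `F`. -/
def e2 (a : ZMod 2) : F := (a.val : F)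

/-- The inner product `x·d = Σ x_i d_i` of two vectors over `F`. -/
def dotF {m : ℕ} (x d : Fin m → F) : F := ∑ i, x i * d i

/-- The quaternary vector `d_1 + w·d_2` attached to a pair of binary vectors. -/
def dvec {m : ℕ} (w : F) (p : (Fin m → ZMod 2) × (Fin m → ZMod 2)) : Fin m → F :=
  fun i => e2 (p.1 i) + w * e2 (p.2 i)

/-- The Hamming weight of the codeword `c_D(x) = (x·d)_{d∈D}`. -/
def wtF {m : ℕ} (D : Finset (Fin m → F)) (x : Fin m → F) : ℕ :=
  (D.filter (fun d => dotF x d ≠ 0)).card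

/-- The codeword `c_D(x) = (x·d)_{d∈D}` of the code with defining set `D`. -/
def codeword {m : ℕ} (D : Finset (Fin m → F)) (x : Fin m → F) : {d // d ∈ D} → F :=
  fun d => dotF x d.1



lemma char2' (hF : Fintype.card F = 4) : (1 : F) + 1 = 0 := by
  have h0 : ((Fintype.card F : ℕ) : F) = 0 := Nat.cast_card_eq_zero F
  have hp : (ringChar F).Prime := CharP.char_is_prime F (ringChar F)
  have hdvd : ringChar F ∣ 4 := by
    rw [← hF]; exact (ringChar.spec F (Fintype.card F)).mp h0
  have hle : ringChar F ≤ 4 := Nat.le_of_dvd (by norm_num) hdvd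
  have h2 : ringChar F = 2 := by
    interval_cases h : ringChar F <;> revert hp hdvd <;> decide
  have h4 : ((2:ℕ) : F) = 0 := (ringChar.spec F 2).mpr (h2 ▸ dvd_rfl)
  rw [one_add_one_eq_two]
  exact_mod_cast h4

lemma zmod2_cases (s : ZMod 2) : s = 0 ∨ s = 1 := by revert s; decide

lemma e2_zero : (e2 0 : F) = 0 := by simp [e2]
lemma e2_one : (e2 1 : F) = 1 := by rw [e2, ZMod.val_one]; norm_num

lemma e2_add (hc : (1:F) + 1 = 0) (s t : ZMod 2) : (e2 (s + t) : F) = e2 s + e2 t := by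
  rcases zmod2_cases s with h|h <;> rcases zmod2_cases t with h'|h' <;> subst h h' <;>
    simp only [(by decide : (1:ZMod 2)+1 = 0), e2_zero, e2_one, add_zero, zero_add] <;>
    first | rfl | linear_combination hc | linear_combination -hc

lemma e2_mul (s t : ZMod 2) : (e2 (s * t) : F) = e2 s * e2 t := by
  rcases zmod2_cases s with h|h <;> rcases zmod2_cases t with h'|h' <;> subst h h' <;>
    simp [e2_zero, e2_one]

lemma e2_eq_zero_iff (s : ZMod 2) : (e2 s : F) = 0 ↔ s = 0 := by
  rcases zmod2_cases s with h|h <;> subst h <;> simp [e2_zero, e2_one]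

lemma w_ne_zero (w : F) (hw : w ^ 2 + w + 1 = 0) : w ≠ 0 := by
  intro h; rw [h] at hw; simp at hw

lemma w_ne_one (w : F) (hw : w ^ 2 + w + 1 = 0) (hc : (1:F) + 1 = 0) : w ≠ 1 := by
  intro h; rw [h] at hw
  have : (1:F) = 0 := by linear_combination hw - hc
  exact one_ne_zero this

lemma indep (w : F) (hw : w ^ 2 + w + 1 = 0) (hc : (1:F) + 1 = 0) (s t : ZMod 2)
    (h : (e2 s : F) + w * e2 t = 0) : s = 0 ∧ t = 0 := by
  have hw0 := w_ne_zero w hw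
  have hw1 := w_ne_one w hw hc
  rcases zmod2_cases s with h1|h1 <;> rcases zmod2_cases t with h2|h2 <;> subst h1 h2 <;>
      simp only [e2_zero, e2_one, mul_one, mul_zero, add_zero, zero_add] at h
  · exact ⟨rfl, rfl⟩
  · exact absurd h hw0
  · exact absurd h one_ne_zero
  · exact absurd (show w = 1 by linear_combination h - hc) hw1

lemma zmod2_add_eq_zero (a b : ZMod 2) : a + b = 0 ↔ a = b := by revert a b; decide

lemma pair_inj (w : F) (hw : w ^ 2 + w + 1 = 0) (hc : (1:F) + 1 = 0)
    (s t s' t' : ZMod 2) (h : (e2 s : F) + w * e2 t = e2 s' + w * e2 t') :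
    s = s' ∧ t = t' := by
  have h0 : (e2 (s + s') : F) + w * e2 (t + t') = 0 := by
    rw [e2_add hc, e2_add hc]
    linear_combination h + (e2 (s' : ZMod 2) + w * e2 (t' : ZMod 2)) * hc
  obtain ⟨h1, h2⟩ := indep w hw hc _ _ h0
  exact ⟨(zmod2_add_eq_zero s s').mp h1, (zmod2_add_eq_zero t t').mp h2⟩

lemma dvec_inj {m : ℕ} (w : F) (hw : w ^ 2 + w + 1 = 0) (hc : (1:F) + 1 = 0) :
    Function.Injective (dvec (m := m) w) := by
  intro p q h
  have key : ∀ i, p.1 i = q.1 i ∧ p.2 i = q.2 i := fun i =>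
    pair_inj w hw hc _ _ _ _ (congrFun h i)
  exact Prod.ext (funext fun i => (key i).1) (funext fun i => (key i).2)

lemma decomp {m : ℕ} (w : F) (hw : w ^ 2 + w + 1 = 0) (hc : (1:F) + 1 = 0)
    (hF : Fintype.card F = 4) (x : Fin m → F) :
    ∃ u v : Fin m → ZMod 2, ∀ i, x i = e2 (u i) + w * e2 (v i) := by
  have hbij : Function.Bijective (fun p : ZMod 2 × ZMod 2 => (e2 p.1 : F) + w * e2 p.2) := by
    rw [Fintype.bijective_iff_injective_and_card]
    constructor
    · intro p q h
      obtain ⟨h1, h2⟩ := pair_inj w hw hc _ _ _ _ h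
      exact Prod.ext h1 h2
    · simp [hF]
  choose f hf using fun i => hbij.2 (x i)
  exact ⟨fun i => (f i).1, fun i => (f i).2, fun i => (hf i).symm⟩

def dot2 {m : ℕ} (u d : Fin m → ZMod 2) : ZMod 2 := ∑ i, u i * d i

lemma mul4 (w : F) (hw : w ^ 2 + w + 1 = 0) (hc : (1:F) + 1 = 0) (a b c d : ZMod 2) :
    ((e2 a : F) + w * e2 b) * (e2 c + w * e2 d)
      = e2 (a * c + b * d) + w * e2 (b * c + (a * d + b * d)) := by
  rcases zmod2_cases a with h|h <;> subst h <;>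
  rcases zmod2_cases b with h|h <;> subst h <;>
  rcases zmod2_cases c with h|h <;> subst h <;>
  rcases zmod2_cases d with h|h <;> subst h <;>
  simp only [(by decide : (1:ZMod 2)+1 = 0), (by decide : (1:ZMod 2)*1 = 1),
    (by decide : ∀ x : ZMod 2, 0 * x = 0), (by decide : ∀ x : ZMod 2, x * 0 = 0),
    (by decide : ∀ x : ZMod 2, 0 + x = x), (by decide : ∀ x : ZMod 2, x + 0 = x),
    e2_zero, e2_one, mul_zero, mul_one, zero_mul, one_mul, add_zero, zero_add] <;>
  first
  | ring1
  | linear_combination hw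
  | linear_combination hc
  | linear_combination -hc
  | linear_combination w*hc
  | linear_combination -(w*hc)
  | linear_combination hw + hc
  | linear_combination hw - hc
  | linear_combination hw + w*hc
  | linear_combination hw - w*hc
  | linear_combination hw + hc + w*hc
  | linear_combination hw - hc - w*hc
  | linear_combination hw + hc - w*hc
  | linear_combination hw - hc + w*hc

lemma e2_sum {m : ℕ} (hc : (1:F) + 1 = 0) (g : Fin m → ZMod 2) :
    (e2 (∑ i, g i) : F) = ∑ i, (e2 (g i) : F) :=
  map_sum (AddMonoidHom.mk' e2 (e2_add hc)) g Finset.univ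

lemma dot_dvec {m : ℕ} (w : F) (hw : w ^ 2 + w + 1 = 0) (hc : (1:F) + 1 = 0)
    (u v d1 d2 : Fin m → ZMod 2) :
    dotF (fun i => (e2 (u i) : F) + w * e2 (v i)) (dvec w (d1, d2))
      = e2 (dot2 u d1 + dot2 v d2) + w * e2 (dot2 v d1 + (dot2 u d2 + dot2 v d2)) := by
  unfold dotF dvec dot2
  calc ∑ i, ((e2 (u i) : F) + w * e2 (v i)) * (e2 (d1 i) + w * e2 (d2 i))
      = ∑ i, ((e2 (u i * d1 i + v i * d2 i) : F)
          + w * e2 (v i * d1 i + (u i * d2 i + v i * d2 i))) := by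
        exact Finset.sum_congr rfl fun i _ => mul4 w hw hc _ _ _ _
    _ = (∑ i, (e2 (u i * d1 i + v i * d2 i) : F))
          + w * ∑ i, (e2 (v i * d1 i + (u i * d2 i + v i * d2 i)) : F) := by
        rw [Finset.sum_add_distrib, Finset.mul_sum]
    _ = _ := by
        rw [← e2_sum hc, ← e2_sum hc]
        congr 1
        · congr 1; rw [← Finset.sum_add_distrib]
        · congr 1; rw [← Finset.sum_add_distrib, ← Finset.sum_add_distrib]

lemma mem_delta {m : ℕ} (A : Finset (Fin m)) (v : Fin m → ZMod 2) :
    v ∈ delta A ↔ ∀ i, i ∉ A → v i = 0 := by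
  rw [delta, Finset.mem_filter]; simp only [Finset.mem_univ, true_and, supp]
  constructor
  · intro h i hiA
    by_contra hv
    exact hiA (h (Finset.mem_filter.mpr ⟨Finset.mem_univ i, hv⟩))
  · intro h i hi
    rw [Finset.mem_filter] at hi
    by_contra hiA
    exact hi.2 (h i hiA)

lemma card_delta {m : ℕ} (A : Finset (Fin m)) : (delta A).card = 2 ^ A.card := by
  rw [← Finset.card_powerset]
  apply Finset.card_bij' (fun v _ => supp v)
    (fun S _ => fun i => if i ∈ S then 1 else 0)
  · intro v hv
    simp only [Finset.mem_powerset]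
    simpa [delta] using hv
  · intro S hS
    rw [mem_delta]
    intro i hiA
    rw [Finset.mem_powerset] at hS
    have : i ∉ S := fun h => hiA (hS h)
    simp [this]
  · intro v hv
    funext i
    simp only [supp, Finset.mem_filter, Finset.mem_univ, true_and]
    rcases zmod2_cases (v i) with h|h <;> simp [h]
  · intro S hS
    ext i
    simp only [supp, Finset.mem_filter, Finset.mem_univ, true_and]
    by_cases h : i ∈ S <;> simp [h]

lemma delta_inter {m : ℕ} (A B : Finset (Fin m)) :
    delta A ∩ delta B = delta (A ∩ B) := by
  ext v
  simp only [Finset.mem_inter, mem_delta, Finset.mem_inter]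
  constructor
  · intro ⟨h1, h2⟩ i hi
    rcases Decidable.not_and_iff_or_not.mp (fun hx => hi ⟨hx.1, hx.2⟩) with h|h
    · exact h1 i h
    · exact h2 i h
  · intro h
    constructor <;> intro i hi <;> apply h <;> intro hx
    · exact hi hx.1
    · exact hi hx.2

def chi (s : ZMod 2) : ℤ := if s = 0 then 1 else -1

lemma chi_add (s t : ZMod 2) : chi (s + t) = chi s * chi t := by revert s t; decide

lemma chi_prod_eq (s t : ZMod 2) :
    (1 + chi s) * (1 + chi t) = if s = 0 ∧ t = 0 then 4 else 0 := by revert s t; decide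

def Wsum {m : ℕ} (D : Finset (Fin m → ZMod 2)) (p : Fin m → ZMod 2) : ℤ :=
  ∑ d ∈ D, chi (dot2 p d)

lemma dot2_update {m : ℕ} (p d : Fin m → ZMod 2) (j : Fin m) :
    dot2 p (Function.update d j (d j + 1)) = dot2 p d + p j := by
  have key : ∀ i, p i * Function.update d j (d j + 1) i
      = p i * d i + if i = j then p j else 0 := by
    intro i; by_cases h : i = j
    · subst h; simp [Function.update_self, mul_add]
    · rw [Function.update_of_ne h]; simp [h]
  rw [dot2, Finset.sum_congr rfl (fun i _ => key i), Finset.sum_add_distrib,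
    Finset.sum_ite_eq' Finset.univ j, if_pos (Finset.mem_univ j), dot2]

lemma Wsum_delta {m : ℕ} (A : Finset (Fin m)) (p : Fin m → ZMod 2) :
    Wsum (delta A) p = if ∀ i ∈ A, p i = 0 then (2:ℤ) ^ A.card else 0 := by
  by_cases h : ∀ i ∈ A, p i = 0
  · rw [if_pos h]
    have key : ∀ d ∈ delta A, chi (dot2 p d) = 1 := by
      intro d hd
      have h0 : dot2 p d = 0 := by
        unfold dot2
        apply Finset.sum_eq_zero
        intro i _
        by_cases hiA : i ∈ A
        · rw [h i hiA, zero_mul]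
        · rw [(mem_delta A d).mp hd i hiA, mul_zero]
      rw [h0]; rfl
    rw [Wsum, Finset.sum_congr rfl key, Finset.sum_const, card_delta]
    push_cast; ring
  · rw [if_neg h]
    push_neg at h
    obtain ⟨j, hjA, hpj⟩ := h
    have hpj1 : p j = 1 := by
      rcases zmod2_cases (p j) with h|h
      · exact absurd h hpj
      · exact h
    have h1 : ∀ (d : Fin m → ZMod 2), d ∈ delta A →
        chi (dot2 p d) + chi (dot2 p (Function.update d j (d j + 1))) = 0 := by
      intro d _
      rw [dot2_update, hpj1]
      generalize dot2 p d = s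
      revert s; decide
    have h3 : ∀ (d : Fin m → ZMod 2), d ∈ delta A → chi (dot2 p d) ≠ 0 →
        Function.update d j (d j + 1) ≠ d := by
      intro d _ _ hEq
      have h5 := congrFun hEq j
      rw [Function.update_self] at h5
      revert h5
      generalize d j = s
      revert s; decide
    have gmem : ∀ (d : Fin m → ZMod 2), d ∈ delta A →
        Function.update d j (d j + 1) ∈ delta A := by
      intro d hd
      rw [mem_delta]
      intro i hiA
      have hij : i ≠ j := fun hh => hiA (hh ▸ hjA)
      rw [Function.update_of_ne hij]
      exact (mem_delta A d).mp hd i hiA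
    have h4 : ∀ (d : Fin m → ZMod 2), d ∈ delta A →
        Function.update (Function.update d j (d j + 1)) j
          (Function.update d j (d j + 1) j + 1) = d := by
      intro d _
      funext i
      by_cases hij : i = j
      · subst hij
        rw [Function.update_self, Function.update_self]
        generalize d i = s
        revert s; decide
      · rw [Function.update_of_ne hij, Function.update_of_ne hij]
    exact Finset.sum_involution (fun d _ => Function.update d j (d j + 1))
      h1 h3 gmem (fun d hd => h4 d hd)

lemma dot2_add_left {m : ℕ} (u v d : Fin m → ZMod 2) :
    dot2 (u + v) d = dot2 u d + dot2 v d := by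
  unfold dot2
  rw [← Finset.sum_add_distrib]
  exact Finset.sum_congr rfl fun i _ => by rw [Pi.add_apply, add_mul]

def Zc {m : ℕ} (Δ : Finset (Fin m → ZMod 2)) (u v : Fin m → ZMod 2) : ℕ :=
  ((Δ ×ˢ Δ).filter (fun p => dot2 u p.1 + dot2 v p.2 = 0
    ∧ dot2 v p.1 + (dot2 u p.2 + dot2 v p.2) = 0)).card

lemma four_Z {m : ℕ} (Δ : Finset (Fin m → ZMod 2)) (u v : Fin m → ZMod 2) :
    (4:ℤ) * Zc Δ u v = (Δ.card:ℤ)^2 + Wsum Δ u * Wsum Δ v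
      + Wsum Δ v * Wsum Δ (u + v) + Wsum Δ (u + v) * Wsum Δ u := by
  have key : ∀ s1 s2 t1 t2 : ZMod 2,
      (if s1 + t2 = 0 ∧ s2 + (t1 + t2) = 0 then (4:ℤ) else 0)
        = 1 + chi s1 * chi t2 + chi s2 * chi (t1 + t2) + chi (s1 + s2) * chi t1 := by
    decide
  have expand : ∀ p ∈ Δ ×ˢ Δ,
      (if dot2 u p.1 + dot2 v p.2 = 0 ∧ dot2 v p.1 + (dot2 u p.2 + dot2 v p.2) = 0
        then (4:ℤ) else 0)
      = 1 + chi (dot2 u p.1) * chi (dot2 v p.2)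
        + chi (dot2 v p.1) * chi (dot2 (u + v) p.2)
        + chi (dot2 (u + v) p.1) * chi (dot2 u p.2) := by
    intro p _
    rw [dot2_add_left, dot2_add_left]
    exact key (dot2 u p.1) (dot2 v p.1) (dot2 u p.2) (dot2 v p.2)
  have lhs : ∑ p ∈ Δ ×ˢ Δ,
      (if dot2 u p.1 + dot2 v p.2 = 0 ∧ dot2 v p.1 + (dot2 u p.2 + dot2 v p.2) = 0
        then (4:ℤ) else 0) = 4 * Zc Δ u v := by
    rw [Finset.sum_ite, Finset.sum_const, Finset.sum_const_zero, add_zero, Zc]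
    push_cast; ring
  rw [← lhs, Finset.sum_congr rfl expand]
  have hsplit : ∀ f g : (Fin m → ZMod 2) → ℤ,
      ∑ p ∈ Δ ×ˢ Δ, f p.1 * g p.2 = (∑ d ∈ Δ, f d) * (∑ d ∈ Δ, g d) := by
    intro f g
    rw [Finset.sum_mul_sum]
    rw [Finset.sum_product]
  rw [Finset.sum_add_distrib, Finset.sum_add_distrib, Finset.sum_add_distrib,
    Finset.sum_const, Finset.card_product,
    hsplit (fun d => chi (dot2 u d)) (fun d => chi (dot2 v d)),
    hsplit (fun d => chi (dot2 v d)) (fun d => chi (dot2 (u + v) d)),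
    hsplit (fun d => chi (dot2 (u + v) d)) (fun d => chi (dot2 u d))]
  unfold Wsum
  push_cast
  ring

lemma dot_eq_zero_iff {m : ℕ} (w : F) (hw : w ^ 2 + w + 1 = 0) (hc : (1:F) + 1 = 0)
    (u v : Fin m → ZMod 2) (p : (Fin m → ZMod 2) × (Fin m → ZMod 2)) :
    dotF (fun i => (e2 (u i) : F) + w * e2 (v i)) (dvec w p) = 0
      ↔ (dot2 u p.1 + dot2 v p.2 = 0 ∧ dot2 v p.1 + (dot2 u p.2 + dot2 v p.2) = 0) := by
  have hd : dvec w p = dvec w (p.1, p.2) := rfl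
  rw [hd, dot_dvec w hw hc]
  constructor
  · intro h
    exact indep w hw hc _ _ h
  · intro ⟨h1, h2⟩
    rw [h1, h2, e2_zero, mul_zero, add_zero]

lemma wt_D_eq {m : ℕ} (w : F) (hw : w ^ 2 + w + 1 = 0) (hc : (1:F) + 1 = 0)
    (Δ : Finset (Fin m → ZMod 2)) (u v : Fin m → ZMod 2) :
    wtF ((Δ ×ˢ Δ).image (dvec w)) (fun i => (e2 (u i) : F) + w * e2 (v i))
      = Δ.card ^ 2 - Zc Δ u v := by
  rw [wtF, Finset.filter_image]
  rw [Finset.card_image_of_injective _ (dvec_inj w hw hc)]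
  have : (Δ ×ˢ Δ).filter
      (fun a => dotF (fun i => (e2 (u i) : F) + w * e2 (v i)) (dvec w a) ≠ 0)
      = (Δ ×ˢ Δ).filter (fun p => ¬(dot2 u p.1 + dot2 v p.2 = 0
          ∧ dot2 v p.1 + (dot2 u p.2 + dot2 v p.2) = 0)) := by
    apply Finset.filter_congr
    intro p _
    simp only [ne_eq]
    rw [dot_eq_zero_iff w hw hc]
  rw [this]
  have hZ := Finset.card_filter_add_card_filter_not
    (s := Δ ×ˢ Δ) (p := fun p => dot2 u p.1 + dot2 v p.2 = 0
      ∧ dot2 v p.1 + (dot2 u p.2 + dot2 v p.2) = 0)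
  rw [Finset.card_product] at hZ
  have : Δ.card ^ 2 = Δ.card * Δ.card := sq (Δ.card) ▸ rfl
  unfold Zc
  omega

lemma box_bound (C N w1 w2 w3 : ℤ) (hC : 0 ≤ C) (hN : C ≤ N)
    (h1 : -C ≤ w1) (h2 : w1 ≤ N) (h3 : -C ≤ w2) (h4 : w2 ≤ N) (h5 : -C ≤ w3) (h6 : w3 ≤ N) :
    C^2 - 2*C*N ≤ w1*w2 + w2*w3 + w3*w1 := by
  rcases le_total 0 (w2 + w3) with h | h
  · rcases le_total w3 C with h' | h'
    · nlinarith [mul_nonneg (by linarith : (0:ℤ) ≤ w1 + C) (by linarith : (0:ℤ) ≤ w2 + w3),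
        mul_nonneg (by linarith : (0:ℤ) ≤ N - w2) (by linarith : (0:ℤ) ≤ C - w3),
        mul_nonneg (by linarith : (0:ℤ) ≤ w3 + C) (by linarith : (0:ℤ) ≤ N - C)]
    · nlinarith [mul_nonneg (by linarith : (0:ℤ) ≤ w1 + C) (by linarith : (0:ℤ) ≤ w2 + w3),
        mul_nonneg (by linarith : (0:ℤ) ≤ w2 + C) (by linarith : (0:ℤ) ≤ w3 - C),
        mul_nonneg (by linarith : (0:ℤ) ≤ N - w3) hC]
  · nlinarith [mul_nonneg (by linarith : (0:ℤ) ≤ N - w1) (by linarith : (0:ℤ) ≤ -(w2 + w3)),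
      mul_nonneg (by linarith : (0:ℤ) ≤ w2 + C) (by linarith : (0:ℤ) ≤ N + w3),
      mul_nonneg (by linarith : (0:ℤ) ≤ w3 + C) (by linarith : (0:ℤ) ≤ N - C)]

lemma Wsum_union {m : ℕ} (A B : Finset (Fin m)) (p : Fin m → ZMod 2) :
    Wsum (delta A ∪ delta B) p
      = (if ∀ i ∈ A, p i = 0 then (2:ℤ) ^ A.card else 0)
        + (if ∀ i ∈ B, p i = 0 then (2:ℤ) ^ B.card else 0)
        - (if ∀ i ∈ A ∩ B, p i = 0 then (2:ℤ) ^ (A ∩ B).card else 0) := by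
  have h := Finset.sum_union_inter (s₁ := delta A) (s₂ := delta B)
    (f := fun d => chi (dot2 p d))
  rw [delta_inter] at h
  have h2 : Wsum (delta A ∪ delta B) p + Wsum (delta (A ∩ B)) p
      = Wsum (delta A) p + Wsum (delta B) p := h
  rw [Wsum_delta, Wsum_delta, Wsum_delta] at h2
  omega

lemma Wsum_union_bounds {m : ℕ} (A B : Finset (Fin m)) (p : Fin m → ZMod 2) :
    -(2:ℤ) ^ (A ∩ B).card ≤ Wsum (delta A ∪ delta B) p
    ∧ Wsum (delta A ∪ delta B) p ≤ 2 ^ A.card + 2 ^ B.card - 2 ^ (A ∩ B).card := by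
  rw [Wsum_union]
  have hca : (2:ℤ) ^ (A ∩ B).card ≤ 2 ^ A.card :=
    pow_le_pow_right₀ (by norm_num) (Finset.card_le_card Finset.inter_subset_left)
  have hcb : (2:ℤ) ^ (A ∩ B).card ≤ 2 ^ B.card :=
    pow_le_pow_right₀ (by norm_num) (Finset.card_le_card Finset.inter_subset_right)
  have hpos : ∀ n : ℕ, (0:ℤ) < 2 ^ n := fun n => by positivity
  split_ifs with g1 g2 g3 g4 g5 g6 g7 <;>
  first
  | (constructor <;> linarith [hpos A.card, hpos B.card, hpos (A ∩ B).card])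
  | (exact absurd (fun i hi => g1 i (Finset.mem_of_mem_inter_left hi)) (by assumption))
  | (exact absurd (fun i hi => g2 i (Finset.mem_of_mem_inter_right hi)) (by assumption))
  | (exact absurd (fun i hi => g5 i (Finset.mem_of_mem_inter_right hi)) (by assumption))

lemma Wsum_union_zero {m : ℕ} (A B : Finset (Fin m)) :
    Wsum (delta A ∪ delta B) 0 = 2 ^ A.card + 2 ^ B.card - 2 ^ (A ∩ B).card := by
  rw [Wsum_union]
  simp

lemma dotF_zero_right {m : ℕ} (x : Fin m → F) : dotF x 0 = 0 := by
  simp [dotF]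

lemma dotF_add_right {m : ℕ} (x d e : Fin m → F) :
    dotF x (d + e) = dotF x d + dotF x e := by
  simp [dotF, mul_add, Finset.sum_add_distrib]

lemma dotF_sub_left {m : ℕ} (x y d : Fin m → F) :
    dotF (x - y) d = dotF x d - dotF y d := by
  simp [dotF, sub_mul, Finset.sum_sub_distrib]

lemma ker_card {m : ℕ} (hF : Fintype.card F = 4) (x : Fin m → F) (hx : x ≠ 0) :
    (Finset.univ.filter (fun d : Fin m → F => dotF x d = 0)).card * 4 = 4 ^ m := by
  classical
  let f : (Fin m → F) →+ F := AddMonoidHom.mk' (fun d => dotF x d)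
    (fun d e => dotF_add_right x d e)
  obtain ⟨i, hi⟩ := Function.ne_iff.mp hx
  have hxi : x i ≠ 0 := by simpa using hi
  have hsurj : Function.Surjective f := by
    intro cc
    refine ⟨Pi.single i ((x i)⁻¹ * cc), ?_⟩
    show dotF x (Pi.single i ((x i)⁻¹ * cc)) = cc
    rw [dotF, Finset.sum_eq_single i]
    · rw [Pi.single_eq_same, ← mul_assoc, mul_inv_cancel₀ hxi, one_mul]
    · intro k _ hk
      rw [Pi.single_eq_of_ne hk, mul_zero]
    · intro h
      exact absurd (Finset.mem_univ i) h
  have hrange : f.range = ⊤ := AddMonoidHom.range_eq_top.mpr hsurj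
  have hcard := AddSubgroup.card_eq_card_quotient_mul_card_addSubgroup f.ker
  have hquot : Nat.card ((Fin m → F) ⧸ f.ker) = 4 := by
    have e1 := QuotientAddGroup.quotientKerEquivRange f
    rw [Nat.card_congr e1.toEquiv, hrange]
    rw [Nat.card_congr (AddSubgroup.topEquiv).toEquiv]
    rw [Nat.card_eq_fintype_card, hF]
  have hker : Nat.card f.ker
      = (Finset.univ.filter (fun d : Fin m → F => dotF x d = 0)).card := by
    rw [Nat.card_congr (Equiv.subtypeEquivRight
      (fun d => f.mem_ker (x := d)))]
    rw [Nat.card_eq_fintype_card, Fintype.card_subtype]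
    rfl
  have htot : Nat.card (Fin m → F) = 4 ^ m := by
    rw [Nat.card_eq_fintype_card, Fintype.card_fun, hF, Fintype.card_fin]
  rw [htot, hquot, hker] at hcard
  omega

lemma wt_univ_erase' {m : ℕ} (hF : Fintype.card F = 4) (x : Fin m → F) (hx : x ≠ 0) :
    wtF (Finset.univ.erase (0 : Fin m → F)) x * 4 + 4 ^ m = 4 ^ m * 4 := by
  have h0 : dotF x (0 : Fin m → F) = 0 := dotF_zero_right x
  have hfe : (Finset.univ.erase (0 : Fin m → F)).filter (fun d => dotF x d ≠ 0)
      = Finset.univ.filter (fun d : Fin m → F => dotF x d ≠ 0) := by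
    rw [Finset.filter_erase]
    apply Finset.erase_eq_of_notMem
    simp [h0]
  have hsplit := Finset.card_filter_add_card_filter_not
    (s := (Finset.univ : Finset (Fin m → F))) (p := fun d => dotF x d = 0)
  have hcu : (Finset.univ : Finset (Fin m → F)).card = 4 ^ m := by
    rw [Finset.card_univ, Fintype.card_fun, hF, Fintype.card_fin]
  have hk := ker_card hF x hx
  rw [wtF, hfe]
  simp only [ne_eq]
  omega

lemma zero_mem_delta {m : ℕ} (A : Finset (Fin m)) : (0 : Fin m → ZMod 2) ∈ delta A := by
  rw [mem_delta]; intro i _; rfl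

/-- Theorem 4.10 (length, size, weight relation and minimum distance): for `Δ = Δ_A ∪ Δ_B`
with `A ⊄ B`, `B ⊄ A`, `D = Δ + wΔ`, `N = 2^{|A|}+2^{|B|}−2^{|A∩B|}` and
`D^c = (F_4^m \ {0}) \ D`, the code `C_{D^c}` has length `4^m − N²`, `4^m` codewords,
`wt(c_{D^c}(x)) = 3·2^{2m−2} − wt(c_D(x))` for `x ≠ 0`, and minimum distance
`3·2^{2m−2} − (2^{|A|}+2^{|B|})(3·2^{|A|−2}+3·2^{|B|−2}−2^{|A∩B|})`. -/
theorem quaternary_complement_two_maximal_elements {m : ℕ} (hm : 1 ≤ m)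
    (hF : Fintype.card F = 4) (w : F) (hw : w ^ 2 + w + 1 = 0)
    (A B : Finset (Fin m)) (hA : ¬ A ⊆ B) (hB : ¬ B ⊆ A)
    (a b c : ℕ) (ha : a = A.card) (hb : b = B.card) (hc : c = (A ∩ B).card)
    (d : ℚ) (hd : d = 3 * 2 ^ (2 * m - 2)
      - (2 ^ a + 2 ^ b) * (3 * 2 ^ a / 4 + 3 * 2 ^ b / 4 - 2 ^ c)) :
    ((Finset.univ.erase (0 : Fin m → F))
        \ (((delta A ∪ delta B) ×ˢ (delta A ∪ delta B)).image (dvec w))).card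
      = 4 ^ m - (2 ^ a + 2 ^ b - 2 ^ c) ^ 2
    ∧ (Finset.univ.image
        (fun x : Fin m → F => codeword
          ((Finset.univ.erase (0 : Fin m → F))
            \ (((delta A ∪ delta B) ×ˢ (delta A ∪ delta B)).image (dvec w))) x)).card
      = 4 ^ m
    ∧ (∀ x : Fin m → F, x ≠ 0 →
        (wtF ((Finset.univ.erase (0 : Fin m → F))
            \ (((delta A ∪ delta B) ×ˢ (delta A ∪ delta B)).image (dvec w))) x : ℤ)
          = 3 * 2 ^ (2 * m - 2)
            - wtF (((delta A ∪ delta B) ×ˢ (delta A ∪ delta B)).image (dvec w)) x)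
    ∧ (∀ x : Fin m → F,
        wtF ((Finset.univ.erase (0 : Fin m → F))
            \ (((delta A ∪ delta B) ×ˢ (delta A ∪ delta B)).image (dvec w))) x = 0
        ∨ d ≤ (wtF ((Finset.univ.erase (0 : Fin m → F))
            \ (((delta A ∪ delta B) ×ˢ (delta A ∪ delta B)).image (dvec w))) x : ℚ))
    ∧ (∃ x : Fin m → F,
        (wtF ((Finset.univ.erase (0 : Fin m → F))
            \ (((delta A ∪ delta B) ×ˢ (delta A ∪ delta B)).image (dvec w))) x : ℚ) = d) := by
  classical
  have hc2 : (1:F) + 1 = 0 := char2' hF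
  set Δ : Finset (Fin m → ZMod 2) := delta A ∪ delta B with hΔdef
  set D : Finset (Fin m → F) := (Δ ×ˢ Δ).image (dvec w) with hDdef
  set Dc : Finset (Fin m → F) := Finset.univ.erase 0 \ D with hDcdef
  obtain ⟨i, hiA, hiB⟩ := Finset.not_subset.mp hA
  obtain ⟨j, hjB, hjA⟩ := Finset.not_subset.mp hB
  -- cardinality facts
  have hcam : c < a := by
    rw [ha, hc]
    apply Finset.card_lt_card
    rw [Finset.ssubset_iff_of_subset Finset.inter_subset_left]
    exact ⟨i, hiA, fun hmem => hiB (Finset.mem_inter.mp hmem).2⟩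
  have hcbm : c < b := by
    rw [hb, hc]
    apply Finset.card_lt_card
    rw [Finset.ssubset_iff_of_subset Finset.inter_subset_right]
    exact ⟨j, hjB, fun hmem => hjA (Finset.mem_inter.mp hmem).1⟩
  have ham : a < m := by
    rw [ha]
    calc A.card < (Finset.univ : Finset (Fin m)).card :=
          Finset.card_lt_card ((Finset.ssubset_iff_of_subset (Finset.subset_univ A)).mpr
            ⟨j, Finset.mem_univ j, hjA⟩)
      _ = m := Finset.card_fin m
  have hbm : b < m := by
    rw [hb]
    calc B.card < (Finset.univ : Finset (Fin m)).card :=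
          Finset.card_lt_card ((Finset.ssubset_iff_of_subset (Finset.subset_univ B)).mpr
            ⟨i, Finset.mem_univ i, hiB⟩)
      _ = m := Finset.card_fin m
  have hpow_ca : (2:ℕ)^c < 2^a := Nat.pow_lt_pow_right (by norm_num) hcam
  have hpow_cb : (2:ℕ)^c < 2^b := Nat.pow_lt_pow_right (by norm_num) hcbm
  set n : ℕ := Δ.card with hndef
  have hNN : n + 2^c = 2^a + 2^b := by
    have h := Finset.card_union_add_card_inter (delta A) (delta B)
    rw [delta_inter, card_delta, card_delta, card_delta, ← ha, ← hb, ← hc] at h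
    exact h
  have hn_lt : n < 2^m := by
    have h2a : (2:ℕ)^a ≤ 2^(m-1) := Nat.pow_le_pow_right (by norm_num) (by omega)
    have h2b : (2:ℕ)^b ≤ 2^(m-1) := Nat.pow_le_pow_right (by norm_num) (by omega)
    have h2m : (2:ℕ)^(m-1) + 2^(m-1) = 2^m := by
      rw [← two_mul, ← pow_succ']
      congr 1
      omega
    have hcpos : 0 < (2:ℕ)^c := by positivity
    omega
  have hDcard : D.card = n * n := by
    rw [hDdef, Finset.card_image_of_injective _ (dvec_inj w hw hc2),
      Finset.card_product]
  have h0D : (0 : Fin m → F) ∈ D := by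
    rw [hDdef, Finset.mem_image]
    refine ⟨(0, 0), ?_, ?_⟩
    · rw [Finset.mem_product]
      constructor <;> (rw [hΔdef]; exact Finset.mem_union_left _ (zero_mem_delta A))
    · funext k
      simp [dvec, e2_zero]
  have hcu : (Finset.univ : Finset (Fin m → F)).card = 4 ^ m := by
    rw [Finset.card_univ, Fintype.card_fun, hF, Fintype.card_fin]
  have h4m : (4:ℕ)^m = 2^m * 2^m := by
    rw [show (4:ℕ) = 2*2 from rfl, mul_pow]
  -- Part 1
  have part1 : Dc.card = 4 ^ m - (2 ^ a + 2 ^ b - 2 ^ c) ^ 2 := by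
    have hsd : Dc = (Finset.univ.erase (0 : Fin m → F)) \ (D.erase 0) := by
      ext y
      simp only [hDcdef, Finset.mem_sdiff, Finset.mem_erase, Finset.mem_univ, true_and,
        and_true, not_and]
      tauto
    have hsub : D.erase 0 ⊆ Finset.univ.erase (0 : Fin m → F) :=
      Finset.erase_subset_erase _ (Finset.subset_univ D)
    have hcd : Dc.card = (Finset.univ.erase (0 : Fin m → F)).card - (D.erase 0).card := by
      rw [hsd, Finset.card_sdiff_of_subset hsub]
    rw [Finset.card_erase_of_mem (Finset.mem_univ _), hcu,
      Finset.card_erase_of_mem h0D, hDcard] at hcd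
    have hk : 2^a + 2^b - 2^c = n := by omega
    rw [hk, pow_two]
    have hnn : n * n < 2^m * 2^m := Nat.mul_lt_mul'' hn_lt hn_lt
    have hnpos : 0 < n := by
      have hcpos : 0 < (2:ℕ)^c := by positivity
      omega
    have : 1 ≤ n * n := Nat.one_le_iff_ne_zero.mpr (by positivity)
    omega
  -- Part 3
  have part3 : ∀ x : Fin m → F, x ≠ 0 →
      (wtF Dc x : ℤ) = 3 * 2 ^ (2 * m - 2) - wtF D x := by
    intro x hx
    have hWe := wt_univ_erase' hF x hx
    have hpow : (4:ℕ)^(m-1) = 2^(2*m-2) := by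
      rw [show (4:ℕ) = 2^2 from rfl, ← pow_mul]
      congr 1
      omega
    have h4m' : (4:ℕ)^m = 4^(m-1)*4 := by
      rw [← pow_succ]
      congr 1
      omega
    have hwe : wtF (Finset.univ.erase (0 : Fin m → F)) x = 3 * 2^(2*m-2) := by omega
    have hfs : Dc.filter (fun y => dotF x y ≠ 0)
        = ((Finset.univ.erase (0 : Fin m → F)).filter (fun y => dotF x y ≠ 0))
          \ (D.filter (fun y => dotF x y ≠ 0)) := by
      rw [hDcdef]
      ext y
      simp only [Finset.mem_sdiff, Finset.mem_filter]
      tauto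
    have hsub2 : D.filter (fun y => dotF x y ≠ 0)
        ⊆ (Finset.univ.erase (0 : Fin m → F)).filter (fun y => dotF x y ≠ 0) := by
      intro y hy
      rw [Finset.mem_filter] at hy ⊢
      refine ⟨Finset.mem_erase.mpr ⟨?_, Finset.mem_univ y⟩, hy.2⟩
      intro h0
      rw [h0] at hy
      exact hy.2 (dotF_zero_right x)
    have hcds : wtF Dc x = wtF (Finset.univ.erase (0 : Fin m → F)) x - wtF D x := by
      rw [wtF, hfs, Finset.card_sdiff_of_subset hsub2]
      rfl
    have hle : wtF D x ≤ wtF (Finset.univ.erase (0 : Fin m → F)) x :=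
      Finset.card_le_card hsub2
    rw [hcds]
    rw [hwe] at hle ⊢
    push_cast [Nat.cast_sub hle]
    push_cast [hwe]
    ring
  -- integer constants
  have hNZdef : ((n:ℤ)) = (Δ.card : ℤ) := by rw [hndef]
  have hCZpos : (0:ℤ) < 2^c := by positivity
  have hCZle : (2:ℤ)^c ≤ (n:ℤ) := by
    have h1 : (2:ℕ)^c ≤ n := by omega
    exact_mod_cast h1
  -- main weight bound
  have hbound : ∀ x : Fin m → F, (wtF D x : ℤ) * 4
      ≤ 3*(n:ℤ)^2 - ((2:ℤ)^c)^2 + 2*(2:ℤ)^c*(n:ℤ) := by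
    intro x
    obtain ⟨u, v, huv⟩ := decomp w hw hc2 hF x
    have hxuv : x = fun k => (e2 (u k) : F) + w * e2 (v k) := funext huv
    have hwt : wtF D x = n^2 - Zc Δ u v := by
      rw [hxuv, hDdef, hndef]
      exact wt_D_eq w hw hc2 Δ u v
    have hZle : Zc Δ u v ≤ n^2 := by
      rw [pow_two, hndef, ← Finset.card_product]
      exact Finset.card_filter_le _ _
    have h4Z := four_Z Δ u v
    rw [← hNZdef] at h4Z
    have hbu := Wsum_union_bounds A B u
    have hbv := Wsum_union_bounds A B v
    have hbuv := Wsum_union_bounds A B (u + v)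
    rw [← hΔdef, ← ha, ← hb, ← hc] at hbu hbv hbuv
    have hNZeq : (n:ℤ) = 2^a + 2^b - 2^c := by
      have h9 : ((n:ℤ)) + 2^c = 2^a + 2^b := by exact_mod_cast hNN
      linarith
    have hbox := box_bound ((2:ℤ)^c) ((n:ℤ)) (Wsum Δ u) (Wsum Δ v) (Wsum Δ (u + v))
      (le_of_lt hCZpos) hCZle (by linarith [hbu.1]) (by linarith [hbu.2, hNZeq])
      (by linarith [hbv.1]) (by linarith [hbv.2, hNZeq])
      (by linarith [hbuv.1]) (by linarith [hbuv.2, hNZeq])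
    have hwtz : (wtF D x : ℤ) = (n:ℤ)^2 - (Zc Δ u v : ℤ) := by
      rw [hwt]
      push_cast [Nat.cast_sub hZle]
      ring
    linarith [hbox, h4Z, hwtz]
  -- rational facts
  have hNQ : ((n:ℚ)) = 2^a + 2^b - 2^c := by
    have h9 : ((n:ℚ)) + 2^c = 2^a + 2^b := by exact_mod_cast hNN
    linarith
  -- lower bound for nonzero x
  have hge : ∀ x : Fin m → F, x ≠ 0 → d ≤ (wtF Dc x : ℚ) := by
    intro x hx
    have h3 := part3 x hx
    have hb := hbound x
    have h3q : (wtF Dc x : ℚ) = 3 * 2 ^ (2*m-2) - (wtF D x : ℚ) := by exact_mod_cast h3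
    have hbq : (wtF D x : ℚ) * 4 ≤ 3*(n:ℚ)^2 - ((2:ℚ)^c)^2 + 2*(2:ℚ)^c*(n:ℚ) := by
      exact_mod_cast hb
    have hid : 3*(n:ℚ)^2 - ((2:ℚ)^c)^2 + 2*(2:ℚ)^c*(n:ℚ)
        = 4*((2^a+2^b) * (3*2^a/4 + 3*2^b/4 - 2^c)) := by
      rw [hNQ]; ring
    rw [hd]
    linarith [h3q, hbq, hid]
  -- d is positive
  have hdpos : 0 < d := by
    rw [hd]
    have hqa : (2:ℚ)^a ≤ 2^(m-1) := by
      apply pow_le_pow_right₀ (by norm_num)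
      omega
    have hqb : (2:ℚ)^b ≤ 2^(m-1) := by
      apply pow_le_pow_right₀ (by norm_num)
      omega
    have hqc1 : (1:ℚ) ≤ 2^c := by exact_mod_cast Nat.one_le_two_pow (n := c)
    have hqa1 : (1:ℚ) ≤ 2^a := by exact_mod_cast Nat.one_le_two_pow (n := a)
    have hqb1 : (1:ℚ) ≤ 2^b := by exact_mod_cast Nat.one_le_two_pow (n := b)
    have hq2 : (2:ℚ)^(m-1) * 2^(m-1) = 2^(2*m-2) := by
      rw [← pow_add]
      congr 1
      omega
    nlinarith [mul_nonneg (by linarith : (0:ℚ) ≤ 2^(m-1) - 2^a) (by linarith : (0:ℚ) ≤ 2^(m-1) - 2^b),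
      mul_nonneg (by linarith : (0:ℚ) ≤ 2^(m-1) - 2^a) (by linarith : (0:ℚ) ≤ 2^a - 1),
      mul_nonneg (by linarith : (0:ℚ) ≤ 2^(m-1) - 2^b) (by linarith : (0:ℚ) ≤ 2^b - 1),
      mul_pos (by linarith : (0:ℚ) < 2^a + 2^b) (by linarith : (0:ℚ) < 2^c)]
  -- Part 2
  have hinj : Function.Injective (fun x : Fin m → F => codeword Dc x) := by
    intro x y hxy
    by_contra hne
    have hz : x - y ≠ 0 := sub_ne_zero.mpr hne
    have hwge := hge (x - y) hz
    have hwne : wtF Dc (x - y) ≠ 0 := by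
      intro h
      rw [h] at hwge
      norm_num at hwge
      linarith
    obtain ⟨y0, hy0⟩ := Finset.card_pos.mp (Nat.pos_of_ne_zero hwne)
    rw [Finset.mem_filter] at hy0
    have heq : dotF x y0 = dotF y y0 := congrFun hxy ⟨y0, hy0.1⟩
    apply hy0.2
    rw [dotF_sub_left, heq, sub_self]
  have part2 : (Finset.univ.image (fun x : Fin m → F => codeword Dc x)).card = 4 ^ m := by
    rw [Finset.card_image_of_injective _ hinj, hcu]
  -- Part 4
  have part4 : ∀ x : Fin m → F, wtF Dc x = 0 ∨ d ≤ (wtF Dc x : ℚ) := by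
    intro x
    by_cases hx : x = 0
    · left
      rw [hx, wtF]
      apply Finset.card_eq_zero.mpr
      apply Finset.filter_eq_empty_iff.mpr
      intro y _
      simp [dotF]
    · right
      exact hge x hx
  -- Part 5
  have part5 : ∃ x : Fin m → F, (wtF Dc x : ℚ) = d := by
    set u0 : Fin m → ZMod 2 := fun k => if k = i ∨ k = j then 1 else 0 with hu0def
    refine ⟨fun k => (e2 (u0 k) : F) + w * e2 ((0 : Fin m → ZMod 2) k), ?_⟩
    set x0 : Fin m → F := fun k => (e2 (u0 k) : F) + w * e2 ((0 : Fin m → ZMod 2) k) with hx0def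
    have hij : i ≠ j := fun h => hiB (h ▸ hjB)
    have hu0i : u0 i = 1 := by rw [hu0def]; exact if_pos (Or.inl rfl)
    have hu0j : u0 j = 1 := by rw [hu0def]; exact if_pos (Or.inr rfl)
    have hx0ne : x0 ≠ 0 := by
      intro h
      have h2 := congrFun h i
      rw [hx0def] at h2
      simp only [hu0i, e2_one, Pi.zero_apply, e2_zero, mul_zero, add_zero] at h2
      exact one_ne_zero h2
    have hPA : ¬ (∀ k ∈ A, u0 k = 0) := by
      intro hall
      have := hall i hiA
      rw [hu0i] at this
      exact one_ne_zero this
    have hPB : ¬ (∀ k ∈ B, u0 k = 0) := by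
      intro hall
      have := hall j hjB
      rw [hu0j] at this
      exact one_ne_zero this
    have hPAB : ∀ k ∈ A ∩ B, u0 k = 0 := by
      intro k hk
      rw [Finset.mem_inter] at hk
      have hki : k ≠ i := fun h => hiB (h ▸ hk.2)
      have hkj : k ≠ j := fun h => hjA (h ▸ hk.1)
      rw [hu0def]
      simp [hki, hkj]
    have hWu0 : Wsum Δ u0 = -(2:ℤ)^c := by
      rw [hΔdef, Wsum_union, if_neg hPA, if_neg hPB, if_pos hPAB, ← hc]
      ring
    have hW0 : Wsum Δ (0 : Fin m → ZMod 2) = (n:ℤ) := by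
      rw [hΔdef, Wsum_union_zero, ← ha, ← hb, ← hc]
      have h9 : ((n:ℤ)) + 2^c = 2^a + 2^b := by exact_mod_cast hNN
      linarith
    have h4Z := four_Z Δ u0 0
    rw [add_zero, hWu0, hW0, ← hNZdef] at h4Z
    have hwt : wtF D x0 = n^2 - Zc Δ u0 0 := by
      rw [hx0def, hDdef, hndef]
      exact wt_D_eq w hw hc2 Δ u0 0
    have hZle : Zc Δ u0 0 ≤ n^2 := by
      rw [pow_two, hndef, ← Finset.card_product]
      exact Finset.card_filter_le _ _
    have hwtz : (wtF D x0 : ℤ) = (n:ℤ)^2 - (Zc Δ u0 0 : ℤ) := by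
      rw [hwt]
      push_cast [Nat.cast_sub hZle]
      ring
    have h3 := part3 x0 hx0ne
    have h3q : (wtF Dc x0 : ℚ) = 3 * 2 ^ (2*m-2) - (wtF D x0 : ℚ) := by exact_mod_cast h3
    have hwtq : (wtF D x0 : ℚ) = (n:ℚ)^2 - (Zc Δ u0 0 : ℚ) := by exact_mod_cast hwtz
    have hZq : 4 * (Zc Δ u0 0 : ℚ)
        = (n:ℚ)^2 + (-(2:ℚ)^c)*(n:ℚ) + (n:ℚ)*(-(2:ℚ)^c) + (-(2:ℚ)^c)*(-(2:ℚ)^c) := by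
      exact_mod_cast h4Z
    rw [h3q, hwtq, hd]
    have hZval : (Zc Δ u0 0 : ℚ)
        = ((n:ℚ)^2 - 2*(2:ℚ)^c*(n:ℚ) + ((2:ℚ)^c)^2)/4 := by
      rw [eq_div_iff (by norm_num : (4:ℚ) ≠ 0)]
      linarith [hZq]
    rw [hZval, hNQ]
    ring
  exact ⟨part1, part2, part3, part4, part5⟩
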